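/- Let α be uniformly distributed on [−1, 1] and let κ(α) = α. Then for every 0 ≤ a < b ≤ 2π, the probability that zα mod 2π lies in [a, b] converges to (b−a)/(2π) as z → ∞. -/

import Mathlib

open MeasureTheory Set Filter Real

/-- The representative of `x` modulo `2π` lying in `[0, 2π)`. -/
noncomputable def mod2pi (x : ℝ) : ℝ := x - 2 * π * ⌊x / (2 * π)⌋

lemma mod2pi_periodic : Function.Periodic mod2pi (2 * π) := by
  intro x
  have hπ : (2 * π) ≠ 0 := by positivity
  unfold mod2pi
  have h : (x + 2 * π) / (2 * π) = x / (2 * π) + 1 := by field_simp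
  rw [h, Int.floor_add_one]
  push_cast
  ring

lemma mod2pi_eq_self {x : ℝ} (h0 : 0 ≤ x) (h1 : x < 2 * π) : mod2pi x = x := by
  have hπ : (0:ℝ) < 2 * π := by positivity
  unfold mod2pi
  have : ⌊x / (2 * π)⌋ = 0 := by
    rw [Int.floor_eq_zero_iff]
    constructor
    · positivity
    · exact (div_lt_one hπ).mpr h1
  simp [this]

lemma measurable_mod2pi : Measurable mod2pi := by
  unfold mod2pi
  have h1 : Measurable (fun x : ℝ => ⌊x / (2 * π)⌋) := (measurable_id.div_const _).floor
  have h2 : Measurable (fun n : ℤ => (n : ℝ)) := measurable_from_top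
  exact measurable_id.sub (measurable_const.mul (h2.comp h1))

theorem uniform_phase_equidistribution :
    ∀ a b : ℝ, 0 ≤ a → a < b → b ≤ 2 * π →
      Tendsto (fun z : ℝ =>
          (volume {α ∈ Icc (-1 : ℝ) 1 | mod2pi (z * α) ∈ Icc a b}).toReal / 2)
        atTop (nhds ((b - a) / (2 * π))) := by
  intro a b ha hab hb
  have hπ : (0:ℝ) < π := Real.pi_pos
  have hT : (0:ℝ) < 2 * π := by positivity
  set T : ℝ := 2 * π with hTdef
  set A : Set ℝ := {x | mod2pi x ∈ Icc a b} with hAdef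
  have hAm : MeasurableSet A := measurable_mod2pi measurableSet_Icc
  set g : ℝ → ℝ := A.indicator 1 with hgdef
  have hba : (0:ℝ) < b - a := by linarith
  have hgper : Function.Periodic g T := by
    intro x
    have hmem : x + T ∈ A ↔ x ∈ A := by
      simp only [hAdef, mem_setOf_eq, hTdef, mod2pi_periodic x]
    simp only [hgdef, indicator_apply, hmem, Pi.one_apply]
  have h_int : ∀ t₁ t₂, IntervalIntegrable g volume t₁ t₂ := by
    intro t₁ t₂
    rw [intervalIntegrable_iff]
    exact (integrableOn_const measure_Ioc_lt_top.ne).indicator hAm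
  set F : ℝ → ℝ := fun t => ∫ x in (0:ℝ)..t, g x with hFdef
  have hI : (∫ x in (0:ℝ)..T, g x) = b - a := by
    rw [intervalIntegral.integral_of_le hT.le,
      MeasureTheory.integral_indicator_one hAm, measureReal_def, Measure.restrict_apply hAm]
    have hvol : volume (A ∩ Ioc 0 T) = ENNReal.ofReal (b - a) := by
      apply le_antisymm
      · have hsub : A ∩ Ioc 0 T ⊆ Icc a b ∪ {T} := by
          rintro x ⟨hxA, hx0, hxT⟩
          rcases lt_or_eq_of_le hxT with h | h
          · left
            have hms := mod2pi_eq_self hx0.le h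
            rw [hAdef] at hxA
            simpa [hms] using hxA
          · right; simp [h]
        calc volume (A ∩ Ioc 0 T) ≤ volume (Icc a b ∪ {T}) := measure_mono hsub
          _ ≤ volume (Icc a b) + volume ({T} : Set ℝ) := measure_union_le _ _
          _ = ENNReal.ofReal (b - a) := by simp [Real.volume_Icc]
      · have hsub : Ioo a b ⊆ A ∩ Ioc 0 T := by
          rintro x ⟨hx1, hx2⟩
          have hx0 : 0 < x := lt_of_le_of_lt ha hx1
          have hxT : x < T := lt_of_lt_of_le hx2 hb
          refine ⟨?_, hx0, hxT.le⟩
          rw [hAdef]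
          simp only [mem_setOf_eq, mod2pi_eq_self hx0.le hxT]
          exact ⟨hx1.le, hx2.le⟩
        calc ENNReal.ofReal (b - a) = volume (Ioo a b) := (Real.volume_Ioo).symm
          _ ≤ volume (A ∩ Ioc 0 T) := measure_mono hsub
    rw [hvol, ENNReal.toReal_ofReal hba.le]
  set m : ℝ := sInf (F '' Icc 0 T) with hmdef
  set M : ℝ := sSup (F '' Icc 0 T) with hMdef
  have hlow : ∀ t : ℝ, m + (⌊t / T⌋ : ℝ) * (b - a) ≤ F t := by
    intro t
    have h := hgper.sInf_add_zsmul_le_integral_of_pos (h_int 0 T) hT t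
    rw [hI] at h
    simpa [zsmul_eq_mul] using h
  have hhigh : ∀ t : ℝ, F t ≤ M + (⌊t / T⌋ : ℝ) * (b - a) := by
    intro t
    have h := hgper.integral_le_sSup_add_zsmul_of_pos (h_int 0 T) hT t
    rw [hI] at h
    simpa [zsmul_eq_mul] using h
  set c : ℝ := (b - a) / T with hcdef
  set C : ℝ := (M - m) + (b - a) with hCdef
  have hfeq : ∀ z : ℝ, 1 ≤ z →
      (volume {α ∈ Icc (-1 : ℝ) 1 | mod2pi (z * α) ∈ Icc a b}).toReal / 2
        = (F z - F (-z)) / (2 * z) := by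
    intro z hz
    have hz0 : (0:ℝ) < z := by linarith
    have hzne : z ≠ 0 := hz0.ne'
    set B : Set ℝ := (fun α => z * α) ⁻¹' A with hBdef
    have hBm : MeasurableSet B := (measurable_const_mul z) hAm
    have hS : {α ∈ Icc (-1 : ℝ) 1 | mod2pi (z * α) ∈ Icc a b} = Icc (-1:ℝ) 1 ∩ B := by
      ext α; simp [hBdef, hAdef]
    have hvol : volume (Icc (-1:ℝ) 1 ∩ B) = volume (B ∩ Ioc (-1:ℝ) 1) := by
      apply le_antisymm
      · have hsub : Icc (-1:ℝ) 1 ∩ B ⊆ (B ∩ Ioc (-1:ℝ) 1) ∪ {-1} := by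
          rintro x ⟨⟨hx1, hx2⟩, hxB⟩
          rcases eq_or_lt_of_le hx1 with h | h
          · exact Or.inr (by simp [← h])
          · exact Or.inl ⟨hxB, h, hx2⟩
        calc volume (Icc (-1:ℝ) 1 ∩ B) ≤ volume ((B ∩ Ioc (-1:ℝ) 1) ∪ {-1}) := measure_mono hsub
          _ ≤ volume (B ∩ Ioc (-1:ℝ) 1) + volume ({-1} : Set ℝ) := measure_union_le _ _
          _ = volume (B ∩ Ioc (-1:ℝ) 1) := by simp
      · exact measure_mono fun x ⟨hxB, hx⟩ => ⟨Ioc_subset_Icc_self hx, hxB⟩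
    have hind : (fun x => g (z * x)) = B.indicator 1 := by
      funext x
      by_cases hx : z * x ∈ A <;> simp [hgdef, indicator, hx, hBdef, mem_preimage]
    have hint1 : (∫ x in (-1:ℝ)..1, g (z * x)) = (volume (B ∩ Ioc (-1:ℝ) 1)).toReal := by
      rw [hind, intervalIntegral.integral_of_le (by norm_num : (-1:ℝ) ≤ 1),
        MeasureTheory.integral_indicator_one hBm, measureReal_def, Measure.restrict_apply hBm]
    have hint2 : (∫ x in (-1:ℝ)..1, g (z * x)) = z⁻¹ * ∫ x in (-z)..z, g x := by
      rw [intervalIntegral.integral_comp_mul_left g hzne]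
      norm_num [smul_eq_mul]
    have hint3 : (∫ x in (-z)..z, g x) = F z - F (-z) := by
      have hadd := intervalIntegral.integral_add_adjacent_intervals (h_int (-z) 0) (h_int 0 z)
      have hsym : (∫ x in (-z)..(0:ℝ), g x) = -∫ x in (0:ℝ)..(-z), g x :=
        intervalIntegral.integral_symm 0 (-z)
      show (∫ x in (-z)..z, g x) = (∫ x in (0:ℝ)..z, g x) - (∫ x in (0:ℝ)..(-z), g x)
      linarith [hadd, hsym]
    rw [hS, hvol, ← hint1, hint2, hint3]
    have h2z : (2 * z) ≠ 0 := by positivity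
    rw [eq_div_iff h2z]
    have hr : z⁻¹ * (F z - F (-z)) / 2 * (2 * z) = (z⁻¹ * z) * (F z - F (-z)) := by ring
    rw [hr, inv_mul_cancel₀ hzne, one_mul]
  have hbound : ∀ z : ℝ, 1 ≤ z →
      c - C / (2 * z) ≤ (F z - F (-z)) / (2 * z) ∧
      (F z - F (-z)) / (2 * z) ≤ c + C / (2 * z) := by
    intro z hz
    have hz0 : (0:ℝ) < z := by linarith
    have h2z : (0:ℝ) < 2 * z := by linarith
    have hf1 : z / T - 1 ≤ (⌊z / T⌋ : ℝ) := by
      have := Int.sub_one_lt_floor (z / T); linarith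
    have hf2 : (⌊z / T⌋ : ℝ) ≤ z / T := Int.floor_le _
    have hf3 : -z / T - 1 ≤ (⌊-z / T⌋ : ℝ) := by
      have := Int.sub_one_lt_floor (-z / T); linarith
    have hf4 : (⌊-z / T⌋ : ℝ) ≤ -z / T := Int.floor_le _
    have hTc : 2 * z * c = (z / T) * (b - a) + (z / T) * (b - a) := by
      rw [hcdef]; field_simp; ring
    have hlo : 2 * z * c - C ≤ F z - F (-z) := by
      have h1 := hlow z
      have h2 := hhigh (-z)
      have e1 : (z / T - 1) * (b - a) ≤ (⌊z / T⌋ : ℝ) * (b - a) :=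
        mul_le_mul_of_nonneg_right hf1 hba.le
      have e2 : (⌊-z / T⌋ : ℝ) * (b - a) ≤ (-z / T) * (b - a) :=
        mul_le_mul_of_nonneg_right hf4 hba.le
      have e3 : (-z / T) * (b - a) = -((z / T) * (b - a)) := by ring
      have e4 : (z / T - 1) * (b - a) = (z / T) * (b - a) - (b - a) := by ring
      linarith [hCdef]
    have hhi : F z - F (-z) ≤ 2 * z * c + C := by
      have h1 := hhigh z
      have h2 := hlow (-z)
      have e1 : (⌊z / T⌋ : ℝ) * (b - a) ≤ (z / T) * (b - a) :=
        mul_le_mul_of_nonneg_right hf2 hba.le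
      have e2 : (-z / T - 1) * (b - a) ≤ (⌊-z / T⌋ : ℝ) * (b - a) :=
        mul_le_mul_of_nonneg_right hf3 hba.le
      have e3 : (-z / T - 1) * (b - a) = -((z / T) * (b - a)) - (b - a) := by ring
      linarith [hCdef]
    have key1 : c - C / (2 * z) = (2 * z * c - C) / (2 * z) := by
      field_simp <;> ring
    have key2 : c + C / (2 * z) = (2 * z * c + C) / (2 * z) := by
      field_simp <;> ring
    constructor
    · rw [key1]
      exact div_le_div_of_nonneg_right hlo h2z.le
    · rw [key2]
      exact div_le_div_of_nonneg_right hhi h2z.le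
  have hC0 : Tendsto (fun z : ℝ => C / (2 * z)) atTop (nhds 0) := by
    apply Tendsto.div_atTop tendsto_const_nhds
    exact tendsto_id.const_mul_atTop two_pos
  have hlowT : Tendsto (fun z : ℝ => c - C / (2 * z)) atTop (nhds c) := by
    simpa using tendsto_const_nhds.sub hC0
  have hhighT : Tendsto (fun z : ℝ => c + C / (2 * z)) atTop (nhds c) := by
    simpa using tendsto_const_nhds.add hC0
  apply tendsto_of_tendsto_of_tendsto_of_le_of_le' hlowT hhighT
  · filter_upwards [eventually_ge_atTop (1:ℝ)] with z hz
    rw [hfeq z hz]; exact (hbound z hz).1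
  · filter_upwards [eventually_ge_atTop (1:ℝ)] with z hz
    rw [hfeq z hz]; exact (hbound z hz).2
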